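/- Let D be a nonempty finite index set with reference prices r_d ≥ 0, passenger numbers t_d ∈ ℕ≥1 and distances l_d ≥ 0 for d ∈ D. Then there exists an optimal solution (p*, f*) with p* ≥ 0, f* ≥ 0 minimizing ∑_{d∈D} t_d · |r_d − (p·l_d + f)| over all p ≥ 0, f ≥ 0 such that at least one of the following holds: (i) there are two distinct OD pairs d₁, d₂ ∈ D with l_{d₁} ≠ l_{d₂} whose reference prices are met exactly, i.e., r_{d₁} = p*·l_{d₁} + f* and r_{d₂} = p*·l_{d₂} + f*; (ii) there is some d ∈ D with r_d = p*·l_d + f* and additionally p* = 0 or f* = 0; (iii) p* = 0 and f* = 0. -/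
import Mathlib

open scoped Classical

lemma abs_perturb {a b : ℝ} (h : a = 0 → b = 0) :
    ∀ t : ℝ, |t| ≤ (if a = 0 then 1 else |a| / (|b| + 1)) →
      |a - t * b| = |a| - t * (if 0 < a then b else -b) := by
  intro t ht
  rcases eq_or_ne a 0 with ha | ha
  · simp [ha, h ha, lt_irrefl]
  · rw [if_neg ha] at ht
    have hb : |t * b| < |a| := by
      rw [abs_mul]
      have h1 : |t| * |b| ≤ (|a| / (|b| + 1)) * |b| :=
        mul_le_mul_of_nonneg_right ht (abs_nonneg b)
      have h2 : (|a| / (|b| + 1)) * |b| < |a| := by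
        rw [div_mul_eq_mul_div, div_lt_iff₀ (by positivity)]
        have : 0 < |a| := abs_pos.mpr ha
        nlinarith [abs_nonneg b]
      linarith
    have hb' := abs_lt.mp hb
    rcases lt_or_gt_of_ne ha with ha' | ha'
    · rw [abs_of_neg ha'] at hb'
      rw [if_neg (not_lt.mpr ha'.le), abs_of_neg ha',
        abs_of_neg (by linarith [hb'.1, hb'.2] : a - t * b < 0)]
      ring
    · rw [abs_of_pos ha'] at hb'
      rw [if_pos ha', abs_of_pos ha',
        abs_of_pos (by linarith [hb'.1, hb'.2] : 0 < a - t * b)]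

set_option maxHeartbeats 2000000 in
theorem affine_distance_finite_dominating_set {ι : Type*} (D : Finset ι) (hD : D.Nonempty)
    (r : ι → ℝ) (t : ι → ℕ) (l : ι → ℝ)
    (hr : ∀ d ∈ D, 0 ≤ r d) (ht : ∀ d ∈ D, 1 ≤ t d) (hl : ∀ d ∈ D, 0 ≤ l d) :
    ∃ p f : ℝ, 0 ≤ p ∧ 0 ≤ f ∧
      (∀ p' f' : ℝ, 0 ≤ p' → 0 ≤ f' →
        ∑ d ∈ D, (t d : ℝ) * |r d - (p * l d + f)| ≤
          ∑ d ∈ D, (t d : ℝ) * |r d - (p' * l d + f')|) ∧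
      ((∃ d₁ ∈ D, ∃ d₂ ∈ D, d₁ ≠ d₂ ∧ l d₁ ≠ l d₂ ∧
          r d₁ = p * l d₁ + f ∧ r d₂ = p * l d₂ + f) ∨
        (∃ d ∈ D, r d = p * l d + f ∧ (p = 0 ∨ f = 0)) ∨
        (p = 0 ∧ f = 0)) := by
  classical
  set F : ℝ × ℝ → ℝ := fun x => ∑ d ∈ D, (t d : ℝ) * |r d - (x.1 * l d + x.2)| with hFdef
  have hFcont : Continuous F := by
    apply continuous_finset_sum
    intro d _
    exact continuous_const.mul
      ((continuous_const.sub ((continuous_fst.mul continuous_const).add continuous_snd)).abs)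
  -- Step 1: existence of a global minimizer over the quadrant
  have hexmin : ∃ x : ℝ × ℝ, (0 ≤ x.1 ∧ 0 ≤ x.2) ∧
      ∀ y : ℝ × ℝ, 0 ≤ y.1 → 0 ≤ y.2 → F x ≤ F y := by
    set S : ℝ := ∑ d ∈ D, (t d : ℝ) * r d with hSdef
    have hS0 : 0 ≤ S :=
      Finset.sum_nonneg fun d hd => mul_nonneg (by positivity) (hr d hd)
    have hF00 : F (0, 0) = S := by
      apply Finset.sum_congr rfl
      intro d hd
      simp [abs_of_nonneg (hr d hd)]
    have hlow : ∀ d0 ∈ D, ∀ y : ℝ × ℝ, 0 ≤ y.1 → 0 ≤ y.2 →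
        y.1 * l d0 + y.2 - S ≤ F y := by
      intro d0 hd0 y hy1 hy2
      have h1 : (t d0 : ℝ) * |r d0 - (y.1 * l d0 + y.2)| ≤ F y :=
        Finset.single_le_sum (f := fun d => (t d : ℝ) * |r d - (y.1 * l d + y.2)|)
          (fun d _ => by positivity) hd0
      have ht0 : (1 : ℝ) ≤ (t d0 : ℝ) := by exact_mod_cast ht d0 hd0
      have h2 : |r d0 - (y.1 * l d0 + y.2)| ≤ (t d0 : ℝ) * |r d0 - (y.1 * l d0 + y.2)| :=
        le_mul_of_one_le_left (abs_nonneg _) ht0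
      have h3 : y.1 * l d0 + y.2 - r d0 ≤ |r d0 - (y.1 * l d0 + y.2)| := by
        rw [abs_sub_comm]
        exact (le_abs_self _).trans_eq' (by ring)
      have h4 : r d0 ≤ S := by
        have : (t d0 : ℝ) * r d0 ≤ S :=
          Finset.single_le_sum (f := fun d => (t d : ℝ) * r d)
            (fun d hd => mul_nonneg (by positivity) (hr d hd)) hd0
        nlinarith [hr d0 hd0]
      linarith
    by_cases hex : ∃ d1 ∈ D, 0 < l d1
    · obtain ⟨d1, hd1, hld1⟩ := hex
      set K : Set (ℝ × ℝ) := Set.Icc 0 ((2 * S + 1) / l d1) ×ˢ Set.Icc 0 (2 * S + 1) with hKdef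
      have hKc : IsCompact K := isCompact_Icc.prod isCompact_Icc
      have h00K : ((0 : ℝ), (0 : ℝ)) ∈ K := by
        constructor <;> constructor <;> first | rfl | positivity
      obtain ⟨x0, hx0K, hx0min⟩ := hKc.exists_isMinOn ⟨_, h00K⟩ hFcont.continuousOn
      refine ⟨x0, ⟨hx0K.1.1, hx0K.2.1⟩, ?_⟩
      intro y hy1 hy2
      by_cases hyK : y ∈ K
      · exact hx0min hyK
      · have hfx0 : F x0 ≤ S := hF00 ▸ hx0min h00K
        have hbig : 2 * S + 1 < y.1 * l d1 ∨ 2 * S + 1 < y.2 := by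
          by_contra hcon
          push_neg at hcon
          exact hyK ⟨⟨hy1, (le_div_iff₀ hld1).mpr (by linarith [hcon.1])⟩, ⟨hy2, hcon.2⟩⟩
        have := hlow d1 hd1 y hy1 hy2
        have hy1l : 0 ≤ y.1 * l d1 := mul_nonneg hy1 hld1.le
        rcases hbig with hb | hb <;> linarith
    · push_neg at hex
      have hl0 : ∀ d ∈ D, l d = 0 := fun d hd => le_antisymm (hex d hd) (hl d hd)
      obtain ⟨d0, hd0⟩ := hD
      set K : Set (ℝ × ℝ) := Set.Icc 0 0 ×ˢ Set.Icc 0 (2 * S + 1) with hKdef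
      have hKc : IsCompact K := isCompact_Icc.prod isCompact_Icc
      have h00K : ((0 : ℝ), (0 : ℝ)) ∈ K := by
        constructor <;> constructor <;> first | rfl | positivity
      obtain ⟨x0, hx0K, hx0min⟩ := hKc.exists_isMinOn ⟨_, h00K⟩ hFcont.continuousOn
      refine ⟨x0, ⟨hx0K.1.1, hx0K.2.1⟩, ?_⟩
      intro y hy1 hy2
      have hyproj : F y = F (0, y.2) := by
        apply Finset.sum_congr rfl
        intro d hd
        rw [hl0 d hd]
        norm_num
      by_cases hy2K : y.2 ≤ 2 * S + 1
      · rw [hyproj]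
        exact hx0min ⟨⟨le_refl 0, le_refl 0⟩, ⟨hy2, hy2K⟩⟩
      · have hfx0 : F x0 ≤ S := hF00 ▸ hx0min h00K
        have := hlow d0 hd0 y hy1 hy2
        have hy1l : 0 ≤ y.1 * l d0 := mul_nonneg hy1 (hl d0 hd0)
        linarith
  obtain ⟨x0, ⟨hx01, hx02⟩, hx0min⟩ := hexmin
  set m : ℝ := F x0 with hmdef
  -- Step 2: lexicographic selection among minimizers
  set M0 : Set (ℝ × ℝ) := {y | 0 ≤ y.1 ∧ 0 ≤ y.2 ∧ F y = m} with hM0def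
  have hM0closed : IsClosed M0 := by
    have : M0 = {y : ℝ × ℝ | 0 ≤ y.1} ∩ ({y | 0 ≤ y.2} ∩ F ⁻¹' {m}) := rfl
    rw [this]
    exact (isClosed_le continuous_const continuous_fst).inter
      ((isClosed_le continuous_const continuous_snd).inter
        (isClosed_singleton.preimage hFcont))
  have hx0M0 : x0 ∈ M0 := ⟨hx01, hx02, rfl⟩
  set c0 : ℝ := x0.1 + x0.2 with hc0def
  set B0 : Set (ℝ × ℝ) := Set.Icc 0 c0 ×ˢ Set.Icc 0 c0 with hB0def
  have hK1c : IsCompact (M0 ∩ B0) :=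
    IsCompact.of_isClosed_subset (isCompact_Icc.prod isCompact_Icc)
      (hM0closed.inter (isClosed_Icc.prod isClosed_Icc)) Set.inter_subset_right
  have hx0K1 : x0 ∈ M0 ∩ B0 :=
    ⟨hx0M0, ⟨⟨hx01, le_add_of_nonneg_right hx02⟩, ⟨hx02, le_add_of_nonneg_left hx01⟩⟩⟩
  obtain ⟨x1, hx1K1, hx1min⟩ :=
    hK1c.exists_isMinOn ⟨_, hx0K1⟩ (continuous_fst.add continuous_snd).continuousOn
  have hx1M0 : x1 ∈ M0 := hx1K1.1
  have hg1glob : ∀ y ∈ M0, x1.1 + x1.2 ≤ y.1 + y.2 := by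
    intro y hy
    by_cases hyB : y ∈ B0
    · exact hx1min ⟨hy, hyB⟩
    · have h1 : x1.1 + x1.2 ≤ c0 := hx1min hx0K1
      have hy1 : 0 ≤ y.1 := hy.1
      have hy2 : 0 ≤ y.2 := hy.2.1
      have : c0 < y.1 ∨ c0 < y.2 := by
        by_contra hcon
        push_neg at hcon
        exact hyB ⟨⟨hy1, hcon.1⟩, ⟨hy2, hcon.2⟩⟩
      rcases this with hb | hb <;> linarith
  set M1 : Set (ℝ × ℝ) := {y | y ∈ M0 ∧ y.1 + y.2 = x1.1 + x1.2} with hM1def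
  have hM1closed : IsClosed M1 :=
    hM0closed.inter (isClosed_eq (continuous_fst.add continuous_snd) continuous_const)
  have hM1sub : M1 ⊆ Set.Icc 0 (x1.1 + x1.2) ×ˢ Set.Icc 0 (x1.1 + x1.2) := by
    rintro y ⟨⟨hy1, hy2, _⟩, hysum⟩
    exact ⟨⟨hy1, by linarith⟩, ⟨hy2, by linarith⟩⟩
  have hK2c : IsCompact M1 :=
    IsCompact.of_isClosed_subset (isCompact_Icc.prod isCompact_Icc) hM1closed hM1sub
  have hx1M1 : x1 ∈ M1 := ⟨hx1M0, rfl⟩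
  obtain ⟨x2, hx2M1, hx2min⟩ := hK2c.exists_isMinOn ⟨_, hx1M1⟩ continuous_fst.continuousOn
  obtain ⟨⟨hp, hf, hx2m⟩, hx2sum⟩ := hx2M1
  have hglob : ∀ y : ℝ × ℝ, 0 ≤ y.1 → 0 ≤ y.2 → F x2 ≤ F y := by
    intro y h1 h2
    rw [hx2m]
    exact hx0min y h1 h2
  have hsum : ∀ y ∈ M0, x2.1 + x2.2 ≤ y.1 + y.2 := by
    intro y hy
    rw [hx2sum]
    exact hg1glob y hy
  have hpmin : ∀ y ∈ M1, x2.1 ≤ y.1 := fun y hy => hx2min hy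
  refine ⟨x2.1, x2.2, hp, hf, fun p' f' h1 h2 => hglob (p', f') h1 h2, ?_⟩
  -- Step 3: structural property by contradiction
  by_contra hcon
  push_neg at hcon
  obtain ⟨h1, h2, h3⟩ := hcon
  -- perturbation machinery
  have key : ∀ vp vf : ℝ,
      (∀ d ∈ D, r d - (x2.1 * l d + x2.2) = 0 → vp * l d + vf = 0) →
      ∃ ε > 0, ∃ C : ℝ, ∀ t' : ℝ, |t'| ≤ ε →
        F (x2.1 + t' * vp, x2.2 + t' * vf) = m - t' * C := by
    intro vp vf hv
    set a : ι → ℝ := fun d => r d - (x2.1 * l d + x2.2) with hadef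
    set b : ι → ℝ := fun d => vp * l d + vf with hbdef
    set εf : ι → ℝ := fun d => if a d = 0 then 1 else |a d| / (|b d| + 1) with hεfdef
    have hεfpos : ∀ d, 0 < εf d := by
      intro d
      simp only [hεfdef]
      split
      · exact one_pos
      · next h =>
          have : 0 < |a d| := abs_pos.mpr h
          positivity
    set ε : ℝ := D.inf' hD εf with hεdef
    have hεpos : 0 < ε := by
      rw [hεdef, Finset.lt_inf'_iff]
      exact fun d _ => hεfpos d
    refine ⟨ε, hεpos, ∑ d ∈ D, (t d : ℝ) * (if 0 < a d then b d else -(b d)), ?_⟩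
    intro t' ht'
    have hterm : ∀ d ∈ D,
        |r d - ((x2.1 + t' * vp) * l d + (x2.2 + t' * vf))| =
          |a d| - t' * (if 0 < a d then b d else -(b d)) := by
      intro d hd
      have h1 : r d - ((x2.1 + t' * vp) * l d + (x2.2 + t' * vf)) = a d - t' * b d := by
        simp only [hadef, hbdef]
        ring
      rw [h1]
      exact abs_perturb (hv d hd) t' (ht'.trans (Finset.inf'_le εf hd))
    have hFx2 : F x2 = ∑ d ∈ D, (t d : ℝ) * |a d| := rfl
    calc F (x2.1 + t' * vp, x2.2 + t' * vf)
        = ∑ d ∈ D, (t d : ℝ) * (|a d| - t' * (if 0 < a d then b d else -(b d))) := by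
          refine Finset.sum_congr rfl fun d hd => ?_
          show (t d : ℝ) * |r d - ((x2.1 + t' * vp) * l d + (x2.2 + t' * vf))| = _
          rw [hterm d hd]
      _ = (∑ d ∈ D, (t d : ℝ) * |a d|) -
            t' * ∑ d ∈ D, (t d : ℝ) * (if 0 < a d then b d else -(b d)) := by
          rw [Finset.mul_sum, ← Finset.sum_sub_distrib]
          exact Finset.sum_congr rfl fun d hd => by ring
      _ = m - t' * ∑ d ∈ D, (t d : ℝ) * (if 0 < a d then b d else -(b d)) := by
          rw [← hFx2, hx2m]
  by_cases hE : ∃ d ∈ D, r d = x2.1 * l d + x2.2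
  · -- some reference price met exactly
    obtain ⟨d0, hd0, hrd0⟩ := hE
    have hpf : x2.1 ≠ 0 ∧ x2.2 ≠ 0 := h2 d0 hd0 hrd0
    have hppos : 0 < x2.1 := hp.lt_of_ne (Ne.symm hpf.1)
    have hfpos : 0 < x2.2 := hf.lt_of_ne (Ne.symm hpf.2)
    have hl0' : 0 ≤ l d0 := hl d0 hd0
    have hsame : ∀ d ∈ D, r d = x2.1 * l d + x2.2 → l d = l d0 := by
      intro d hd hrd
      by_contra hne
      have hdne : d ≠ d0 := fun h => hne (by rw [h])
      exact (h1 d hd d0 hd0 hdne hne hrd) hrd0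
    obtain ⟨ε, hε, C, hkey⟩ := key 1 (-(l d0)) (by
      intro d hd ha
      have hrd : r d = x2.1 * l d + x2.2 := by linarith [sub_eq_zero.mp ha]
      have := hsame d hd hrd
      simp [this])
    set ε' : ℝ := min ε (min x2.1 (x2.2 / (l d0 + 1))) with hε'def
    have hε'pos : 0 < ε' := lt_min hε (lt_min hppos (by positivity))
    have hε'ε : ε' ≤ ε := min_le_left _ _
    have hε'p : ε' ≤ x2.1 := (min_le_right _ _).trans (min_le_left _ _)
    have hε'f : ε' * l d0 ≤ x2.2 := by
      have h5 : ε' ≤ x2.2 / (l d0 + 1) := (min_le_right _ _).trans (min_le_right _ _)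
      have h6 : ε' * (l d0 + 1) ≤ x2.2 := by
        rw [← le_div_iff₀ (by positivity)]
        exact h5
      nlinarith
    have habs1 : |ε'| ≤ ε := by rw [abs_of_pos hε'pos]; exact hε'ε
    have habs2 : |(-ε')| ≤ ε := by rw [abs_neg, abs_of_pos hε'pos]; exact hε'ε
    have hKp := hkey ε' habs1
    have hKm := hkey (-ε') habs2
    have hg1 : (0:ℝ) ≤ x2.1 + ε' * 1 := by linarith
    have hg2 : (0:ℝ) ≤ x2.2 + ε' * -(l d0) := by nlinarith
    have hg3 : (0:ℝ) ≤ x2.1 + -ε' * 1 := by linarith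
    have hg4 : (0:ℝ) ≤ x2.2 + -ε' * -(l d0) := by nlinarith
    have hfeasp : m ≤ F (x2.1 + ε' * 1, x2.2 + ε' * -(l d0)) := by
      rw [← hx2m]
      exact hglob _ hg1 hg2
    have hfeasm : m ≤ F (x2.1 + -ε' * 1, x2.2 + -ε' * -(l d0)) := by
      rw [← hx2m]
      exact hglob _ hg3 hg4
    rw [hKp] at hfeasp
    rw [hKm] at hfeasm
    have hC0 : C = 0 := by
      have hle : ε' * C ≤ 0 := by linarith
      have hge : 0 ≤ ε' * C := by linarith
      have h0 : ε' * C = 0 := le_antisymm hle hge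
      rcases mul_eq_zero.mp h0 with h | h
      · exact absurd h (ne_of_gt hε'pos)
      · exact h
    have hmem_m : ((x2.1 + -ε' * 1, x2.2 + -ε' * -(l d0)) : ℝ × ℝ) ∈ M0 := by
      refine ⟨hg3, hg4, ?_⟩
      rw [hKm, hC0]
      ring
    have hmem_p : ((x2.1 + ε' * 1, x2.2 + ε' * -(l d0)) : ℝ × ℝ) ∈ M0 := by
      refine ⟨hg1, hg2, ?_⟩
      rw [hKp, hC0]
      ring
    have hs1 : x2.1 + x2.2 ≤ (x2.1 + -ε' * 1) + (x2.2 + -ε' * -(l d0)) := hsum _ hmem_m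
    have hs2 : x2.1 + x2.2 ≤ (x2.1 + ε' * 1) + (x2.2 + ε' * -(l d0)) := hsum _ hmem_p
    have hq : ε' * l d0 = ε' * 1 := by rw [mul_one]; linarith
    have hl1 : l d0 = 1 := mul_left_cancel₀ (ne_of_gt hε'pos) hq
    have hmemM1 : ((x2.1 + -ε' * 1, x2.2 + -ε' * -(l d0)) : ℝ × ℝ) ∈ M1 := by
      refine ⟨hmem_m, ?_⟩
      show (x2.1 + -ε' * 1) + (x2.2 + -ε' * -(l d0)) = x1.1 + x1.2
      rw [hl1, ← hx2sum]
      ring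
    have hfin : x2.1 ≤ x2.1 + -ε' * 1 := hpmin _ hmemM1
    linarith
  · -- no reference price met exactly
    push_neg at hE
    obtain ⟨ε, hε, C, hkey⟩ := key x2.1 x2.2 (by
      intro d hd ha
      exact absurd (by linarith [sub_eq_zero.mp ha]) (hE d hd))
    set ε' : ℝ := min ε 1 with hε'def
    have hε'pos : 0 < ε' := lt_min hε one_pos
    have hε'ε : ε' ≤ ε := min_le_left _ _
    have hε'1 : ε' ≤ 1 := min_le_right _ _
    have habs1 : |ε'| ≤ ε := by rw [abs_of_pos hε'pos]; exact hε'ε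
    have habs2 : |(-ε')| ≤ ε := by rw [abs_neg, abs_of_pos hε'pos]; exact hε'ε
    have hKp := hkey ε' habs1
    have hKm := hkey (-ε') habs2
    have hg1 : (0:ℝ) ≤ x2.1 + ε' * x2.1 := by nlinarith
    have hg2 : (0:ℝ) ≤ x2.2 + ε' * x2.2 := by nlinarith
    have hg3 : (0:ℝ) ≤ x2.1 + -ε' * x2.1 := by nlinarith
    have hg4 : (0:ℝ) ≤ x2.2 + -ε' * x2.2 := by nlinarith
    have hfeasp : m ≤ F (x2.1 + ε' * x2.1, x2.2 + ε' * x2.2) := by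
      rw [← hx2m]
      exact hglob _ hg1 hg2
    have hfeasm : m ≤ F (x2.1 + -ε' * x2.1, x2.2 + -ε' * x2.2) := by
      rw [← hx2m]
      exact hglob _ hg3 hg4
    rw [hKp] at hfeasp
    rw [hKm] at hfeasm
    have hC0 : C = 0 := by
      have hle : ε' * C ≤ 0 := by linarith
      have hge : 0 ≤ ε' * C := by linarith
      have h0 : ε' * C = 0 := le_antisymm hle hge
      rcases mul_eq_zero.mp h0 with h | h
      · exact absurd h (ne_of_gt hε'pos)
      · exact h
    have hmem_m : ((x2.1 + -ε' * x2.1, x2.2 + -ε' * x2.2) : ℝ × ℝ) ∈ M0 := by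
      refine ⟨hg3, hg4, ?_⟩
      rw [hKm, hC0]
      ring
    have hs1 : x2.1 + x2.2 ≤ (x2.1 + -ε' * x2.1) + (x2.2 + -ε' * x2.2) := hsum _ hmem_m
    have hsum0 : x2.1 + x2.2 ≤ 0 := by nlinarith
    have hp0 : x2.1 = 0 := le_antisymm (by linarith) hp
    have hf0 : x2.2 = 0 := le_antisymm (by linarith) hf
    exact (h3 hp0) hf0
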